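/- The matroid of rank 4 on 9 elements whose circuits of size at most 4 are {1,6,7,8}, {2,5,6,8}, {3,4,6,8}, {1,3,5,8}, {1,2,5,9}, {1,3,4,9}, {1,2,4,8}, {3,5,6,7}, {2,4,6,7}, {1,2,3,6} is not representable over any field. -/
import Mathlib


/-- The circuits of size at most 4 of the rank-4 matroid of Example 4
(the sets `{1,6,7,8}, {2,5,6,8}, {3,4,6,8}, {1,3,5,8}, {1,2,5,9}, {1,3,4,9}, {1,2,4,8},
{3,5,6,7}, {2,4,6,7}, {1,2,3,6}`, shifted to 0-indexing). -/
def ex4Circuits : Set (Set (Fin 9)) :=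
  {{0,5,6,7}, {1,4,5,7}, {2,3,5,7}, {0,2,4,7}, {0,1,4,8},
   {0,2,3,8}, {0,1,3,7}, {2,4,5,6}, {1,3,5,6}, {0,1,2,5}}

/-- Independence in the matroid of Example 4: sets of cardinality at most `4` containing
none of the listed circuits. -/
def ex4Indep (X : Set (Fin 9)) : Prop :=
  X.ncard ≤ 4 ∧ ∀ C ∈ ex4Circuits, ¬C ⊆ X

private lemma ex4.li_det_iff {k : Type*} [Field k] (v : Fin 4 → Fin 4 → k) :
    LinearIndependent k v ↔ (Matrix.of v).det ≠ 0 :=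
  (Matrix.linearIndependent_rows_iff_isUnit (A := Matrix.of v)).trans
    ((Matrix.isUnit_iff_isUnit_det _).trans isUnit_iff_ne_zero)

private lemma ex4.li_restrict {k : Type*} [Field k] (ψ : Fin 9 → Fin 4 → k) (i j l m : Fin 9)
    (h : i ≠ j ∧ i ≠ l ∧ i ≠ m ∧ j ≠ l ∧ j ≠ m ∧ l ≠ m) :
    LinearIndependent k (fun x : ({i,j,l,m} : Set (Fin 9)) => ψ x) ↔
      LinearIndependent k ![ψ i, ψ j, ψ l, ψ m] := by
  obtain ⟨h1,h2,h3,h4,h5,h6⟩ := h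
  let g : Fin 4 → ({i,j,l,m} : Set (Fin 9)) :=
    ![⟨i, by simp⟩, ⟨j, by simp⟩, ⟨l, by simp⟩, ⟨m, by simp⟩]
  have hg : Function.Bijective g := by
    constructor
    · intro x y hxy
      fin_cases x <;> fin_cases y <;> simp_all [g]
    · rintro ⟨x, hx⟩
      rcases hx with rfl | rfl | rfl | rfl
      exacts [⟨0, rfl⟩, ⟨1, rfl⟩, ⟨2, rfl⟩, ⟨3, rfl⟩]
  exact (linearIndependent_equiv' (R := k) (M := Fin 4 → k) (Equiv.ofBijective g hg)
    (by funext x; fin_cases x <;> rfl)).symm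

private lemma ex4.ncard4 {α : Type*} (a b c d : α) : ({a,b,c,d} : Set α).ncard ≤ 4 := by
  have h1 := Set.ncard_insert_le a ({b,c,d} : Set α)
  have h2 := Set.ncard_insert_le b ({c,d} : Set α)
  have h3 := Set.ncard_insert_le c ({d} : Set α)
  have h4 : ({d} : Set α).ncard = 1 := Set.ncard_singleton d
  omega

private lemma ex4.indep_check (a b c d : Fin 9)
    (h : ∀ C ∈ ex4Circuits, ¬C ⊆ ({a,b,c,d} : Set (Fin 9))) :
    ex4Indep {a,b,c,d} := ⟨ex4.ncard4 a b c d, h⟩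

set_option maxHeartbeats 1000000 in
open Matrix in
/-- The rank-4 matroid on 9 elements of Example 4 is not representable over any field. -/
theorem ex4_not_representable {k : Type*} [Field k] (φ : Fin 9 → (Fin 4 → k)) :
    ¬ (Function.Injective φ ∧
        ∀ X : Set (Fin 9), ex4Indep X ↔ LinearIndependent k (fun x : X => φ x)) := by
  rintro ⟨-, hrep⟩
  classical
  have hindep : ∀ a b c d : Fin 9, (∀ C ∈ ex4Circuits, ¬C ⊆ ({a,b,c,d} : Set (Fin 9))) →
      ex4Indep ({a,b,c,d} : Set (Fin 9)) := ex4.indep_check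
  have h0123 : ex4Indep ({0,1,2,3} : Set (Fin 9)) := by
    refine hindep _ _ _ _ ?_
    intro C hC
    simp only [ex4Circuits, Set.mem_insert_iff, Set.mem_singleton_iff] at hC
    rcases hC with rfl|rfl|rfl|rfl|rfl|rfl|rfl|rfl|rfl|rfl <;>
      · simp only [Set.subset_def, Set.mem_insert_iff, Set.mem_singleton_iff]
        decide
  have liv : LinearIndependent k ![φ 0, φ 1, φ 2, φ 3] :=
    (ex4.li_restrict φ 0 1 2 3 (by decide)).1 ((hrep _).1 h0123)
  set M : Matrix (Fin 4) (Fin 4) k := Matrix.of ![φ 0, φ 1, φ 2, φ 3] with hMdef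
  have hdet : M.det ≠ 0 := (ex4.li_det_iff _).1 liv
  have hdetU : IsUnit M.det := isUnit_iff_ne_zero.2 hdet
  set ψ : Fin 9 → Fin 4 → k := fun i => φ i ᵥ* M⁻¹ with hψdef
  have hker : LinearMap.ker (M⁻¹.vecMulLinear) = ⊥ := by
    rw [LinearMap.ker_eq_bot]
    intro x y hxy
    have h2 : (x ᵥ* M⁻¹) ᵥ* M = (y ᵥ* M⁻¹) ᵥ* M := by
      simpa [Matrix.vecMulLinear_apply] using congrArg (· ᵥ* M) hxy
    simpa [Matrix.vecMul_vecMul, Matrix.nonsing_inv_mul M hdetU, Matrix.vecMul_one] using h2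
  have key : ∀ i j l m : Fin 9, (i ≠ j ∧ i ≠ l ∧ i ≠ m ∧ j ≠ l ∧ j ≠ m ∧ l ≠ m) →
      (ex4Indep ({i,j,l,m} : Set (Fin 9)) ↔ (Matrix.of ![ψ i, ψ j, ψ l, ψ m]).det ≠ 0) := by
    intro i j l m h
    rw [hrep, ← ex4.li_det_iff, ← ex4.li_restrict ψ i j l m h]
    exact (LinearMap.linearIndependent_iff (M⁻¹).vecMulLinear hker).symm
  have hMM : M * M⁻¹ = 1 := Matrix.mul_nonsing_inv M hdetU
  have hrowM : ∀ (r : Fin 4) (i9 : Fin 9), φ i9 = M r → ψ i9 = fun j => (1 : Matrix (Fin 4) (Fin 4) k) r j := by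
    intro r i9 h
    funext j
    show (φ i9 ᵥ* M⁻¹) j = _
    rw [h, ← Matrix.mul_apply_eq_vecMul, hMM]
  have hψ0 : ψ 0 = ![(1:k),0,0,0] := by
    rw [hrowM 0 0 rfl]; funext j; fin_cases j <;> simp [Matrix.one_apply]
  have hψ1 : ψ 1 = ![(0:k),1,0,0] := by
    rw [hrowM 1 1 rfl]; funext j; fin_cases j <;> simp [Matrix.one_apply]
  have hψ2 : ψ 2 = ![(0:k),0,1,0] := by
    rw [hrowM 2 2 rfl]; funext j; fin_cases j <;> simp [Matrix.one_apply]
  have hψ3 : ψ 3 = ![(0:k),0,0,1] := by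
    rw [hrowM 3 3 rfl]; funext j; fin_cases j <;> simp [Matrix.one_apply]
  -- circuit determinants vanish
  have hs0 : Fin.succ (0 : Fin 3) = (1 : Fin 4) := rfl
  have hs1 : Fin.succ (1 : Fin 3) = (2 : Fin 4) := rfl
  have hs2 : Fin.succ (2 : Fin 3) = (3 : Fin 4) := rfl
  have hdep : ∀ i j l m : Fin 9, (i ≠ j ∧ i ≠ l ∧ i ≠ m ∧ j ≠ l ∧ j ≠ m ∧ l ≠ m) →
      ({i,j,l,m} : Set (Fin 9)) ∈ ex4Circuits →
      (Matrix.of ![ψ i, ψ j, ψ l, ψ m]).det = 0 := by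
    intro i j l m h hC
    by_contra hne
    exact (((key i j l m h).2 hne).2) _ hC (subset_refl _)
  have z10 := hdep 0 1 2 5 (by decide) (by simp [ex4Circuits])
  have z7 := hdep 0 1 3 7 (by decide) (by simp [ex4Circuits])
  have z1 := hdep 0 5 6 7 (by decide) (by simp [ex4Circuits])
  have z3 := hdep 2 3 5 7 (by decide) (by simp [ex4Circuits])
  have z4 := hdep 0 2 4 7 (by decide) (by simp [ex4Circuits])
  have z8 := hdep 2 4 5 6 (by decide) (by simp [ex4Circuits])
  have z9 := hdep 1 3 5 6 (by decide) (by simp [ex4Circuits])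
  -- nonzero determinants (independent sets)
  have hnz : ∀ i j l m : Fin 9, (i ≠ j ∧ i ≠ l ∧ i ≠ m ∧ j ≠ l ∧ j ≠ m ∧ l ≠ m) →
      (∀ C ∈ ex4Circuits, ¬C ⊆ ({i,j,l,m} : Set (Fin 9))) →
      (Matrix.of ![ψ i, ψ j, ψ l, ψ m]).det ≠ 0 := by
    intro i j l m h hc
    exact (key i j l m h).1 (hindep _ _ _ _ hc)
  have nsub : ∀ X : Set (Fin 9), (∀ x : Fin 9, (x = 0 ∨ x = 5 ∨ x = 6 ∨ x = 7) → x ∈ X) → True := fun _ _ => trivial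
  have n1 := hnz 1 2 3 4 (by decide) (by
    intro C hC
    simp only [ex4Circuits, Set.mem_insert_iff, Set.mem_singleton_iff] at hC
    rcases hC with rfl|rfl|rfl|rfl|rfl|rfl|rfl|rfl|rfl|rfl <;>
      · simp only [Set.subset_def, Set.mem_insert_iff, Set.mem_singleton_iff]; decide)
  have n2 := hnz 0 2 3 5 (by decide) (by
    intro C hC
    simp only [ex4Circuits, Set.mem_insert_iff, Set.mem_singleton_iff] at hC
    rcases hC with rfl|rfl|rfl|rfl|rfl|rfl|rfl|rfl|rfl|rfl <;>
      · simp only [Set.subset_def, Set.mem_insert_iff, Set.mem_singleton_iff]; decide)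
  have n3 := hnz 0 1 3 5 (by decide) (by
    intro C hC
    simp only [ex4Circuits, Set.mem_insert_iff, Set.mem_singleton_iff] at hC
    rcases hC with rfl|rfl|rfl|rfl|rfl|rfl|rfl|rfl|rfl|rfl <;>
      · simp only [Set.subset_def, Set.mem_insert_iff, Set.mem_singleton_iff]; decide)
  have n4 := hnz 0 1 2 6 (by decide) (by
    intro C hC
    simp only [ex4Circuits, Set.mem_insert_iff, Set.mem_singleton_iff] at hC
    rcases hC with rfl|rfl|rfl|rfl|rfl|rfl|rfl|rfl|rfl|rfl <;>
      · simp only [Set.subset_def, Set.mem_insert_iff, Set.mem_singleton_iff]; decide)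
  have n5 := hnz 0 1 2 7 (by decide) (by
    intro C hC
    simp only [ex4Circuits, Set.mem_insert_iff, Set.mem_singleton_iff] at hC
    rcases hC with rfl|rfl|rfl|rfl|rfl|rfl|rfl|rfl|rfl|rfl <;>
      · simp only [Set.subset_def, Set.mem_insert_iff, Set.mem_singleton_iff]; decide)
  -- extract scalar facts
  have eb3 : ψ 5 3 = 0 := by
    rw [← z10]; simp [Matrix.det_succ_row_zero, Fin.sum_univ_succ, Fin.succAbove, hs0, hs1, hs2, hψ0, hψ1, hψ2]
  have ed2 : ψ 7 2 = 0 := by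
    have h : -ψ 7 2 = 0 := by
      rw [← z7]; simp [Matrix.det_succ_row_zero, Fin.sum_univ_succ, Fin.succAbove, hs0, hs1, hs2, hψ0, hψ1, hψ3]
    simpa using h
  have e1 : -(ψ 5 3 * ψ 6 2 * ψ 7 1) + ψ 5 3 * ψ 6 1 * ψ 7 2 + ψ 5 2 * ψ 6 3 * ψ 7 1
      - ψ 5 2 * ψ 6 1 * ψ 7 3 - ψ 5 1 * ψ 6 3 * ψ 7 2 + ψ 5 1 * ψ 6 2 * ψ 7 3 = 0 := by
    rw [← z1]; simp [Matrix.det_succ_row_zero, Fin.sum_univ_succ, Fin.succAbove, hs0, hs1, hs2, hψ0]; ring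
  have e3 : -(ψ 5 1 * ψ 7 0) + ψ 5 0 * ψ 7 1 = 0 := by
    rw [← z3]; simp [Matrix.det_succ_row_zero, Fin.sum_univ_succ, Fin.succAbove, hs0, hs1, hs2, hψ2, hψ3]; ring
  have e4 : ψ 4 3 * ψ 7 1 - ψ 4 1 * ψ 7 3 = 0 := by
    rw [← z4]; simp [Matrix.det_succ_row_zero, Fin.sum_univ_succ, Fin.succAbove, hs0, hs1, hs2, hψ0, hψ2]; ring
  have e8 : -(ψ 4 3 * ψ 5 1 * ψ 6 0) + ψ 4 3 * ψ 5 0 * ψ 6 1 + ψ 4 1 * ψ 5 3 * ψ 6 0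
      - ψ 4 1 * ψ 5 0 * ψ 6 3 - ψ 4 0 * ψ 5 3 * ψ 6 1 + ψ 4 0 * ψ 5 1 * ψ 6 3 = 0 := by
    rw [← z8]; simp [Matrix.det_succ_row_zero, Fin.sum_univ_succ, Fin.succAbove, hs0, hs1, hs2, hψ2]; ring
  have e9 : ψ 5 2 * ψ 6 0 - ψ 5 0 * ψ 6 2 = 0 := by
    rw [← z9]; simp [Matrix.det_succ_row_zero, Fin.sum_univ_succ, Fin.succAbove, hs0, hs1, hs2, hψ1, hψ3]; ring
  have na0 : ψ 4 0 ≠ 0 := by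
    intro h; apply n1
    simp [Matrix.det_succ_row_zero, Fin.sum_univ_succ, Fin.succAbove, hs0, hs1, hs2, hψ1, hψ2, hψ3, h]
  have nb1 : ψ 5 1 ≠ 0 := by
    intro h; apply n2
    simp [Matrix.det_succ_row_zero, Fin.sum_univ_succ, Fin.succAbove, hs0, hs1, hs2, hψ0, hψ2, hψ3, h]
  have nb2 : ψ 5 2 ≠ 0 := by
    intro h; apply n3
    simp [Matrix.det_succ_row_zero, Fin.sum_univ_succ, Fin.succAbove, hs0, hs1, hs2, hψ0, hψ1, hψ3, h]
  have nc3 : ψ 6 3 ≠ 0 := by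
    intro h; apply n4
    simp [Matrix.det_succ_row_zero, Fin.sum_univ_succ, Fin.succAbove, hs0, hs1, hs2, hψ0, hψ1, hψ2, h]
  have nd3 : ψ 7 3 ≠ 0 := by
    intro h; apply n5
    simp [Matrix.det_succ_row_zero, Fin.sum_univ_succ, Fin.succAbove, hs0, hs1, hs2, hψ0, hψ1, hψ2, h]
  have main : ψ 4 0 * ψ 5 1 * ψ 5 2 * ψ 6 3 * ψ 7 3 = 0 := by
    linear_combination (ψ 5 2 * ψ 7 3) * e8 + (ψ 4 3 * ψ 5 0) * e1 + (ψ 4 3 * ψ 5 1 * ψ 7 3) * e9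
      - (ψ 5 0 * ψ 5 2 * ψ 6 3) * e4
      + (ψ 4 3 * ψ 5 0 * ψ 6 2 * ψ 7 1 - ψ 4 3 * ψ 5 0 * ψ 6 1 * ψ 7 2
         - ψ 4 1 * ψ 5 2 * ψ 6 0 * ψ 7 3 + ψ 4 0 * ψ 5 2 * ψ 6 1 * ψ 7 3) * eb3
      + (ψ 4 3 * ψ 5 0 * ψ 5 1 * ψ 6 3) * ed2
  exact (mul_ne_zero (mul_ne_zero (mul_ne_zero (mul_ne_zero na0 nb1) nb2) nc3) nd3) main
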